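/- Let (X,Y) be a pair of real-valued random variables on a probability space whose marginal cumulative distribution functions F_X and F_Y are continuous, and let C be a copula such that P(X ≤ x, Y ≤ y) = C(F_X(x), F_Y(y)) for all x, y ∈ ℝ. Then for every v ∈ (0,1), E[F_X(X) · 1{F_Y(Y) ≤ v}] = v − ∫₀¹ C(u,v) du; equivalently, the transformed conditional tail expectation satisfies E[F_X(X) | F_Y(Y) ≤ v] = 1 − (1/v) ∫₀¹ C(u,v) du. -/

import Mathlib

open MeasureTheory Filter Set

/-- A bivariate copula: boundary conditions and the 2-increasing property on `[0,1]²`. -/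
def IsCopula (C : ℝ → ℝ → ℝ) : Prop :=
  (∀ u ∈ Set.Icc (0:ℝ) 1, C u 0 = 0 ∧ C 0 u = 0 ∧ C u 1 = u ∧ C 1 u = u) ∧
  (∀ u ∈ Set.Icc (0:ℝ) 1, ∀ v ∈ Set.Icc (0:ℝ) 1, C u v ∈ Set.Icc (0:ℝ) 1) ∧
  (∀ u₁ u₂ v₁ v₂ : ℝ, 0 ≤ u₁ → u₁ ≤ u₂ → u₂ ≤ 1 → 0 ≤ v₁ → v₁ ≤ v₂ → v₂ ≤ 1 →
    0 ≤ C u₂ v₂ - C u₁ v₂ - C u₂ v₁ + C u₁ v₁)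

lemma exists_exact_quantile (F : ℝ → ℝ) (hm : Monotone F) (hc : Continuous F)
    (h0 : Tendsto F atBot (nhds 0)) (h1 : Tendsto F atTop (nhds 1))
    {u : ℝ} (hu : u ∈ Set.Ioo (0:ℝ) 1) :
    ∃ q, F q = u ∧ ∀ x, x ≤ q ↔ F x ≤ u := by
  set S : Set ℝ := {x | F x ≤ u} with hS
  have hSne : S.Nonempty := by
    obtain ⟨a, ha⟩ := (h0.eventually_lt_const hu.1).exists
    exact ⟨a, ha.le⟩
  have hSbdd : BddAbove S := by
    obtain ⟨b, hb⟩ := (h1.eventually_const_lt hu.2).exists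
    refine ⟨b, fun x hx => ?_⟩
    by_contra h
    push_neg at h
    exact absurd (le_trans (hm h.le) hx) (not_le.2 hb)
  have hScl : IsClosed S := isClosed_le hc continuous_const
  have hqmem : sSup S ∈ S := hScl.csSup_mem hSne hSbdd
  set q := sSup S with hq
  have hgt : ∀ x, q < x → u < F x := by
    intro x hx
    by_contra h
    push_neg at h
    exact absurd (le_csSup hSbdd h) (not_le.2 hx)
  have hge : u ≤ F q := by
    refine ge_of_tendsto ((hc.tendsto q).mono_left (nhdsWithin_le_nhds (s := Set.Ioi q)))
      (Filter.eventually_of_mem self_mem_nhdsWithin fun x hx => (hgt x hx).le)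
  refine ⟨q, le_antisymm hqmem hge, fun x => ⟨fun hx => le_trans (hm hx) hqmem, fun hx => le_csSup hSbdd hx⟩⟩

/-- If `(X,Y)` has continuous marginal CDFs `Fx`, `Fy` and copula `C`
(`P(X ≤ x, Y ≤ y) = C (Fx x) (Fy y)`), then for every `v ∈ (0,1)`,
`E[Fx(X) · 1{Fy(Y) ≤ v}] = v − ∫₀¹ C(u,v) du`; equivalently
`E[Fx(X) | Fy(Y) ≤ v] = 1 − (1/v) ∫₀¹ C(u,v) du`. -/
theorem tcte_copula_representation
    {Ω : Type*} [MeasurableSpace Ω] (μ : Measure Ω) [IsProbabilityMeasure μ]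
    (X Y : Ω → ℝ) (hX : Measurable X) (hY : Measurable Y)
    (Fx Fy : ℝ → ℝ)
    (hFx : ∀ x, Fx x = (μ {ω | X ω ≤ x}).toReal)
    (hFy : ∀ y, Fy y = (μ {ω | Y ω ≤ y}).toReal)
    (hFxc : Continuous Fx) (hFyc : Continuous Fy)
    (C : ℝ → ℝ → ℝ) (hC : IsCopula C)
    (hlink : ∀ x y, (μ {ω | X ω ≤ x ∧ Y ω ≤ y}).toReal = C (Fx x) (Fy y))
    (v : ℝ) (hv : v ∈ Set.Ioo (0:ℝ) 1) :
    (∫ ω in {ω | Fy (Y ω) ≤ v}, Fx (X ω) ∂μ) = v - ∫ u in (0:ℝ)..1, C u v ∧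
    (∫ ω in {ω | Fy (Y ω) ≤ v}, Fx (X ω) ∂μ) / (μ {ω | Fy (Y ω) ≤ v}).toReal
      = 1 - (1/v) * ∫ u in (0:ℝ)..1, C u v := by
  obtain ⟨hv0, hv1⟩ := hv
  -- identify Fx, Fy with cdfs of pushforwards
  have hmapX : IsProbabilityMeasure (μ.map X) := Measure.isProbabilityMeasure_map hX.aemeasurable
  have hmapY : IsProbabilityMeasure (μ.map Y) := Measure.isProbabilityMeasure_map hY.aemeasurable
  have hFx_cdf : Fx = ProbabilityTheory.cdf (μ.map X) := by
    funext x
    rw [hFx, ProbabilityTheory.cdf_eq_real, measureReal_def, Measure.map_apply hX measurableSet_Iic]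
    rfl
  have hFy_cdf : Fy = ProbabilityTheory.cdf (μ.map Y) := by
    funext y
    rw [hFy, ProbabilityTheory.cdf_eq_real, measureReal_def, Measure.map_apply hY measurableSet_Iic]
    rfl
  have hFxm : Monotone Fx := hFx_cdf ▸ ProbabilityTheory.monotone_cdf _
  have hFym : Monotone Fy := hFy_cdf ▸ ProbabilityTheory.monotone_cdf _
  have hFx0 : Tendsto Fx atBot (nhds 0) := hFx_cdf ▸ ProbabilityTheory.tendsto_cdf_atBot _
  have hFx1 : Tendsto Fx atTop (nhds 1) := hFx_cdf ▸ ProbabilityTheory.tendsto_cdf_atTop _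
  have hFy0 : Tendsto Fy atBot (nhds 0) := hFy_cdf ▸ ProbabilityTheory.tendsto_cdf_atBot _
  have hFy1 : Tendsto Fy atTop (nhds 1) := hFy_cdf ▸ ProbabilityTheory.tendsto_cdf_atTop _
  -- quantile for v
  obtain ⟨qv, hqv_eq, hqv_iff⟩ := exists_exact_quantile Fy hFym hFyc hFy0 hFy1 ⟨hv0, hv1⟩
  have hA : {ω | Fy (Y ω) ≤ v} = {ω | Y ω ≤ qv} := by
    ext ω; exact (hqv_iff (Y ω)).symm
  set A : Set Ω := {ω | Y ω ≤ qv} with hAdef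
  have hAmeas : MeasurableSet A := hY measurableSet_Iic
  have hμA : (μ A).toReal = v := by rw [← hqv_eq, hFy]
  set f : Ω → ℝ := fun ω => Fx (X ω) with hfdef
  have hfmeas : Measurable f := hFxc.measurable.comp hX
  have hf0 : ∀ ω, 0 ≤ f ω := fun ω => by rw [hfdef]; simp only [hFx]; exact ENNReal.toReal_nonneg
  have hf1 : ∀ ω, f ω ≤ 1 := fun ω => by
    rw [hfdef]; simp only [hFx]
    exact ENNReal.toReal_le_of_le_ofReal one_pos.le (by simpa using prob_le_one)
  set ρ : Measure Ω := μ.restrict A with hρdef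
  have hρfin : IsFiniteMeasure ρ := by rw [hρdef]; infer_instance
  -- joint distribution of (Fx∘X, 1_A)
  have hjoint : ∀ t ∈ Set.Ioo (0:ℝ) 1, (ρ {ω | f ω ≤ t}).toReal = C t v := by
    intro t ht
    obtain ⟨q, hq_eq, hq_iff⟩ := exists_exact_quantile Fx hFxm hFxc hFx0 hFx1 ht
    have hset : {ω | f ω ≤ t} ∩ A = {ω | X ω ≤ q ∧ Y ω ≤ qv} := by
      ext ω
      simp only [Set.mem_inter_iff, Set.mem_setOf_eq, hAdef, hfdef]
      rw [hq_iff (X ω)]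
    have hms : MeasurableSet {ω | f ω ≤ t} := hfmeas measurableSet_Iic
    rw [hρdef, Measure.restrict_apply hms, hset, hlink, hq_eq, hqv_eq]
  have hρuniv : (ρ Set.univ).toReal = v := by
    rw [hρdef, Measure.restrict_apply_univ]; exact hμA
  -- integrability
  have hfint : Integrable f ρ := by
    refine (integrable_const (1:ℝ)).mono' (hfmeas.aestronglyMeasurable) ?_
    exact Filter.Eventually.of_forall fun ω => by
      rw [Real.norm_eq_abs, abs_of_nonneg (hf0 ω)]; exact hf1 ω
  -- layer cake
  have hlayer : ∫ ω, f ω ∂ρ = ∫ t in Set.Ioc (0:ℝ) 1, (ρ {ω | t ≤ f ω}).toReal :=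
    hfint.integral_eq_integral_Ioc_meas_le (Filter.Eventually.of_forall hf0)
      (Filter.Eventually.of_forall hf1)
  -- replace ≤ by < a.e. and compute the integrand
  have hcongr : ∫ t in Set.Ioc (0:ℝ) 1, (ρ {ω | t ≤ f ω}).toReal
      = ∫ t in Set.Ioc (0:ℝ) 1, (v - C t v) := by
    refine integral_congr_ae ?_
    have h1 := meas_le_ae_eq_meas_lt ρ (volume.restrict (Set.Ioc (0:ℝ) 1)) f
    have h2 : ∀ᵐ t ∂(volume.restrict (Set.Ioc (0:ℝ) 1)), t ∈ Set.Ioo (0:ℝ) 1 := by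
      rw [← Measure.restrict_congr_set Ioo_ae_eq_Ioc]
      exact (ae_restrict_iff' measurableSet_Ioo).2 (Filter.Eventually.of_forall fun t ht => ht)
    filter_upwards [h1, h2] with t h1t h2t
    have hle : (ρ {ω | f ω ≤ t}).toReal = C t v := hjoint t h2t
    have hsum : ρ {ω | f ω ≤ t} + ρ {ω | t < f ω} = ρ Set.univ := by
      have hcompl : {ω | f ω ≤ t}ᶜ = {ω | t < f ω} := by
        ext ω; simp [not_le]
      rw [← hcompl]
      exact measure_add_measure_compl (hfmeas measurableSet_Iic)
    have htr : (ρ {ω | f ω ≤ t}).toReal + (ρ {ω | t < f ω}).toReal = v := by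
      rw [← ENNReal.toReal_add (measure_ne_top ρ _) (measure_ne_top ρ _), hsum, hρuniv]
    rw [congrArg ENNReal.toReal h1t]
    linarith
  -- monotonicity and integrability of C · v
  have hCmono : MonotoneOn (fun u => C u v) (Set.Icc (0:ℝ) 1) := by
    intro a ha b hb hab
    have h2i := hC.2.2 a b 0 v ha.1 hab hb.2 le_rfl hv0.le hv1.le
    have ha0 : C a 0 = 0 := (hC.1 a ha).1
    have hb0 : C b 0 = 0 := (hC.1 b hb).1
    simp only at h2i ⊢
    linarith
  have hCint : IntervalIntegrable (fun u => C u v) volume 0 1 := by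
    apply MonotoneOn.intervalIntegrable
    rwa [Set.uIcc_of_le zero_le_one]
  have hval : ∫ t in Set.Ioc (0:ℝ) 1, (v - C t v) = v - ∫ u in (0:ℝ)..1, C u v := by
    rw [← intervalIntegral.integral_of_le zero_le_one,
      intervalIntegral.integral_sub intervalIntegrable_const hCint]
    simp
  have hmain : (∫ ω in {ω | Fy (Y ω) ≤ v}, Fx (X ω) ∂μ) = v - ∫ u in (0:ℝ)..1, C u v := by
    rw [hA]
    calc ∫ ω in A, Fx (X ω) ∂μ = ∫ ω, f ω ∂ρ := rfl
      _ = v - ∫ u in (0:ℝ)..1, C u v := by rw [hlayer, hcongr, hval]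
  refine ⟨hmain, ?_⟩
  rw [hmain, hA, hμA]
  field_simp
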